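/- arXiv:1002.4789 — 2 statements merged into one kernel-verified Lean document; each statement's English description precedes it below -/
import Mathlib

section
/- Let (Ω, 𝓕, P) be a probability space, let r_L, r_R, k be positive integers, and let U : Ω → ℝ^{(r_R r_L) × k} be a measurable random matrix whose entries have finite variance. Then there exist subspaces S₁ ⊆ ℝ^{r_R} and S₂ ⊆ ℝ^{r_L} such that (1) span(U(ω)) ⊆ S₁ ⊗ S₂ for P-almost every ω, and (2) whenever subspaces S₁' ⊆ ℝ^{r_R} and S₂' ⊆ ℝ^{r_L} satisfy span(U(ω)) ⊆ S₁' ⊗ S₂' for P-almost every ω, one has S₁ ⊗ S₂ ⊆ S₁' ⊗ S₂'. -/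
open Matrix MeasureTheory ProbabilityTheory

/-- Column-stacking vectorization of a matrix: for `A : Matrix (Fin m) (Fin n) ℝ`,
`vecF A` is the vector in `ℝ^{nm}` with `vecF A (i + m*j) = A i j`
(the columns of `A` stacked on top of each other). -/
def vecF {m n : ℕ} (A : Matrix (Fin m) (Fin n) ℝ) : Fin (n * m) → ℝ :=
  fun x => A (finProdFinEquiv.symm x).2 (finProdFinEquiv.symm x).1

/-- Kronecker product of matrices with flat `Fin` indices:
`(A ⊗ B)_{(i-1)p+k, (j-1)q+l} = A i j * B k l`. -/
def kronF {m n p q : ℕ} (A : Matrix (Fin m) (Fin n) ℝ) (B : Matrix (Fin p) (Fin q) ℝ) :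
    Matrix (Fin (m * p)) (Fin (n * q)) ℝ :=
  Matrix.of fun i j =>
    A (finProdFinEquiv.symm i).1 (finProdFinEquiv.symm j).1 *
      B (finProdFinEquiv.symm i).2 (finProdFinEquiv.symm j).2

/-- Kronecker product of vectors: `(v ⊗ w)_{(i-1)n+j} = v i * w j`. -/
def vkronF {m n : ℕ} (v : Fin m → ℝ) (w : Fin n → ℝ) : Fin (m * n) → ℝ :=
  fun x => v (finProdFinEquiv.symm x).1 * w (finProdFinEquiv.symm x).2

/-- The Kronecker product of two subspaces `S ⊆ ℝ^m` and `T ⊆ ℝ^n`: the span in `ℝ^{mn}` of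
all Kronecker products `v ⊗ w` with `v ∈ S`, `w ∈ T`. -/
def skron {m n : ℕ} (S : Submodule ℝ (Fin m → ℝ)) (T : Submodule ℝ (Fin n → ℝ)) :
    Submodule ℝ (Fin (m * n) → ℝ) :=
  Submodule.span ℝ {x | ∃ v ∈ S, ∃ w ∈ T, x = vkronF v w}

/-- The column space of a matrix: the span of its columns. -/
def colSpan {N k : ℕ} (U : Matrix (Fin N) (Fin k) ℝ) : Submodule ℝ (Fin N → ℝ) :=
  Submodule.span ℝ (Set.range fun j => fun i => U i j)

/-- Real matrices carry the Borel (product) σ-algebra. -/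
noncomputable instance {m n : ℕ} : MeasurableSpace (Matrix (Fin m) (Fin n) ℝ) :=
  (inferInstance : MeasurableSpace (Fin m → Fin n → ℝ))

/-- Column `j` of the reshaped vector. -/
def colMapL (m n : ℕ) (j : Fin n) : (Fin (m * n) → ℝ) →ₗ[ℝ] (Fin m → ℝ) where
  toFun x := fun i => x (finProdFinEquiv (i, j))
  map_add' _ _ := rfl
  map_smul' _ _ := rfl

/-- Row `i` of the reshaped vector. -/
def rowMapL (m n : ℕ) (i : Fin m) : (Fin (m * n) → ℝ) →ₗ[ℝ] (Fin n → ℝ) where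
  toFun x := fun j => x (finProdFinEquiv (i, j))
  map_add' _ _ := rfl
  map_smul' _ _ := rfl

theorem skron_mono {m n : ℕ} {S S' : Submodule ℝ (Fin m → ℝ)} {T T' : Submodule ℝ (Fin n → ℝ)}
    (hS : S ≤ S') (hT : T ≤ T') : skron S T ≤ skron S' T' :=
  Submodule.span_mono (fun x hx => by
    obtain ⟨v, hv, w, hw, hx⟩ := hx; exact ⟨v, hS hv, w, hT hw, hx⟩)

theorem cols_rows_of_mem_skron {m n : ℕ} {S : Submodule ℝ (Fin m → ℝ)}
    {T : Submodule ℝ (Fin n → ℝ)} {x : Fin (m * n) → ℝ} (hx : x ∈ skron S T) :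
    (∀ j, colMapL m n j x ∈ S) ∧ (∀ i, rowMapL m n i x ∈ T) := by
  have key : x ∈ (⨅ j, S.comap (colMapL m n j)) ⊓ (⨅ i, T.comap (rowMapL m n i)) := by
    refine Submodule.span_le.mpr ?_ hx
    rintro y ⟨v, hv, w, hw, rfl⟩
    constructor
    · refine (Submodule.mem_iInf _).mpr fun j => ?_
      have : colMapL m n j (vkronF v w) = w j • v := by
        ext i; simp [colMapL, vkronF, mul_comm]
      simpa [Submodule.mem_comap, this] using S.smul_mem (w j) hv
    · refine (Submodule.mem_iInf _).mpr fun i => ?_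
      have : rowMapL m n i (vkronF v w) = v i • w := by
        ext j; simp [rowMapL, vkronF]
      simpa [Submodule.mem_comap, this] using T.smul_mem (v i) hw
  exact ⟨fun j => (Submodule.mem_iInf _).mp key.1 j, fun i => (Submodule.mem_iInf _).mp key.2 i⟩

theorem mem_skron_of_cols_rows {m n : ℕ} {S : Submodule ℝ (Fin m → ℝ)}
    {T : Submodule ℝ (Fin n → ℝ)} {x : Fin (m * n) → ℝ}
    (hc : ∀ j, colMapL m n j x ∈ S) (hr : ∀ i, rowMapL m n i x ∈ T) : x ∈ skron S T := by
  obtain ⟨q, hq⟩ := Submodule.exists_isCompl T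
  set π : (Fin n → ℝ) →ₗ[ℝ] (Fin n → ℝ) := T.subtype ∘ₗ (T.projectionOnto q hq) with hπ
  have hπ_mem : ∀ w, π w ∈ T := fun w => (T.projectionOnto q hq w).2
  have hπ_fix : ∀ w ∈ T, π w = w := by
    intro w hw
    have := Submodule.linearProjOfIsCompl_apply_left hq ⟨w, hw⟩
    simp [hπ, LinearMap.comp_apply, this]
  have hx : x = ∑ j : Fin n, vkronF (colMapL m n j x) (π (Pi.single j 1)) := by
    ext y
    set i := (finProdFinEquiv.symm y).1 with hi
    set j' := (finProdFinEquiv.symm y).2 with hj'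
    have hy : finProdFinEquiv (i, j') = y := by
      rw [hi, hj']; exact finProdFinEquiv.apply_symm_apply y
    have hrow : rowMapL m n i x = ∑ j, x (finProdFinEquiv (i, j)) • (Pi.single j 1 : Fin n → ℝ) := by
      ext j''; simp [rowMapL, Pi.single_apply]
    have h1 : x y = π (rowMapL m n i x) j' := by
      rw [hπ_fix _ (hr i)]
      show x y = x (finProdFinEquiv (i, j')); rw [hy]
    rw [h1, hrow, map_sum]
    simp only [Finset.sum_apply, _root_.map_smul, Pi.smul_apply, smul_eq_mul]
    exact Finset.sum_congr rfl fun j _ => rfl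
  rw [hx]
  exact Submodule.sum_mem _ fun j _ =>
    Submodule.subset_span ⟨_, hc j, _, hπ_mem _, rfl⟩

/-- Theorem 1: existence of the Kronecker envelope of a square-integrable random matrix
`U : Ω → ℝ^{(r_R r_L) × k}`: there is a smallest Kronecker-product subspace `S₁ ⊗ S₂`
containing the column space of `U` almost surely. -/
theorem kronecker_envelope_of_random_matrix (rL rR k : ℕ)
    (hL : 0 < rL) (hR : 0 < rR) (hk : 0 < k)
    {Ω : Type*} [MeasurableSpace Ω] (P : Measure Ω) [IsProbabilityMeasure P]
    (U : Ω → Matrix (Fin (rR * rL)) (Fin k) ℝ) (hU : Measurable U)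
    (hL2 : ∀ i j, MemLp (fun ω => U ω i j) 2 P) :
    ∃ (S₁ : Submodule ℝ (Fin rR → ℝ)) (S₂ : Submodule ℝ (Fin rL → ℝ)),
      (∀ᵐ ω ∂P, colSpan (U ω) ≤ skron S₁ S₂) ∧
        ∀ (S₁' : Submodule ℝ (Fin rR → ℝ)) (S₂' : Submodule ℝ (Fin rL → ℝ)),
          (∀ᵐ ω ∂P, colSpan (U ω) ≤ skron S₁' S₂') → skron S₁ S₂ ≤ skron S₁' S₂' := by
  classical
  set 𝒜 : Set (Submodule ℝ (Fin (rR * rL) → ℝ)) :=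
    {V | ∀ᵐ ω ∂P, colSpan (U ω) ≤ V} with h𝒜
  have hTop : (⊤ : Submodule ℝ (Fin (rR * rL) → ℝ)) ∈ 𝒜 := by
    show ∀ᵐ ω ∂P, colSpan (U ω) ≤ ⊤
    exact Filter.Eventually.of_forall fun ω => le_top
  have hne : ((fun V : Submodule ℝ (Fin (rR * rL) → ℝ) => Module.finrank ℝ V) '' 𝒜).Nonempty :=
    ⟨_, ⟨⊤, hTop, rfl⟩⟩
  obtain ⟨V₀, hV₀A, hV₀rank⟩ := Nat.sInf_mem hne
  have hmin : ∀ V ∈ 𝒜, V₀ ≤ V := by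
    intro V hV
    have hA : V₀ ⊓ V ∈ 𝒜 := by
      show ∀ᵐ ω ∂P, colSpan (U ω) ≤ V₀ ⊓ V
      filter_upwards [hV₀A, hV] with ω h1 h2
      exact le_inf h1 h2
    have h1 : Module.finrank ℝ V₀ ≤ Module.finrank ℝ ↥(V₀ ⊓ V) := by
      exact hV₀rank.le.trans (Nat.sInf_le ⟨_, hA, rfl⟩)
    have h2 : V₀ ⊓ V = V₀ := Submodule.eq_of_le_of_finrank_le inf_le_left h1
    rw [← h2]; exact inf_le_right
  refine ⟨⨆ j, V₀.map (colMapL rR rL j), ⨆ i, V₀.map (rowMapL rR rL i), ?_, ?_⟩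
  · have hle : V₀ ≤ skron (⨆ j, V₀.map (colMapL rR rL j)) (⨆ i, V₀.map (rowMapL rR rL i)) := by
      intro x hx
      exact mem_skron_of_cols_rows
        (fun j => le_iSup (fun j => V₀.map (colMapL rR rL j)) j (Submodule.mem_map_of_mem hx))
        (fun i => le_iSup (fun i => V₀.map (rowMapL rR rL i)) i (Submodule.mem_map_of_mem hx))
    filter_upwards [hV₀A] with ω h
    exact h.trans hle
  · intro S₁' S₂' h'
    have hV : V₀ ≤ skron S₁' S₂' := hmin _ h'
    refine skron_mono ?_ ?_
    · exact iSup_le fun j => Submodule.map_le_iff_le_comap.mpr fun x hx =>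
        (cols_rows_of_mem_skron (hV hx)).1 j
    · exact iSup_le fun i => Submodule.map_le_iff_le_comap.mpr fun x hx =>
        (cols_rows_of_mem_skron (hV hx)).2 i
end

section
/- (Theorem 3.) Let (Ω, 𝓕, P) be a probability space, W : Ω → ℝ^d measurable, and u : ℝ^d → ℝ^{p_R p_L × k} measurable with E‖u(W)‖² < ∞; write U = u(W). Let A ∈ ℝ^{p_R p_L × p_R p_L} be nonsingular. Suppose α₀ ∈ ℝ^{p_L × m_L} and β₀ ∈ ℝ^{p_R × m_R} have full column rank and span(β₀ ⊗ α₀) is the Kronecker envelope of U, i.e., (i) span(U(ω)) ⊆ span(β₀ ⊗ α₀) for P-almost every ω, and (ii) for any subspaces S_R ⊆ ℝ^{p_R}, S_L ⊆ ℝ^{p_L} with span(U(ω)) ⊆ S_R ⊗ S_L almost surely, span(β₀ ⊗ α₀) ⊆ S_R ⊗ S_L. If (a*, b*, f*), with a* ∈ ℝ^{p_L × m_L}, b* ∈ ℝ^{p_R × m_R}, and f* : ℝ^d → ℝ^{m_L m_R × k} measurable with E‖f*(W)‖² < ∞, attains the minimum of E‖A U − A (b ⊗ a) f(W)‖² over all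 such triples (a, b, f), then span(b* ⊗ a*) = span(β₀ ⊗ α₀). Moreover, the minimum value is 0. -/
open Matrix MeasureTheory ProbabilityTheory

section AuxLemmas
open Module

open Kronecker in
lemma kronF_eq_reindex {m n p q : ℕ} (A : Matrix (Fin m) (Fin n) ℝ)
    (B : Matrix (Fin p) (Fin q) ℝ) :
    kronF A B = Matrix.reindex finProdFinEquiv finProdFinEquiv (A ⊗ₖ B) := rfl

lemma kronF_mul {m n p m' n' p' : ℕ} (A : Matrix (Fin m) (Fin n) ℝ)
    (B : Matrix (Fin m') (Fin n') ℝ) (C : Matrix (Fin n) (Fin p) ℝ)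
    (D : Matrix (Fin n') (Fin p') ℝ) :
    kronF A B * kronF C D = kronF (A * C) (B * D) := by
  rw [kronF_eq_reindex, kronF_eq_reindex, kronF_eq_reindex, Matrix.reindex_apply,
    Matrix.reindex_apply, Matrix.reindex_apply, Matrix.submatrix_mul_equiv,
    Matrix.mul_kronecker_mul]

lemma kronF_one (n n' : ℕ) :
    kronF (1 : Matrix (Fin n) (Fin n) ℝ) (1 : Matrix (Fin n') (Fin n') ℝ) = 1 := by
  rw [kronF_eq_reindex, Matrix.one_kronecker_one, Matrix.reindex_apply,
    Matrix.submatrix_one_equiv]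

lemma colSpan_eq_range {N k : ℕ} (U : Matrix (Fin N) (Fin k) ℝ) :
    colSpan U = LinearMap.range U.mulVecLin := by
  rw [Matrix.range_mulVecLin]; rfl

lemma rank_eq_finrank_colSpan {N k : ℕ} (U : Matrix (Fin N) (Fin k) ℝ) :
    U.rank = finrank ℝ (colSpan U) := by
  rw [colSpan_eq_range]; rfl

lemma rank_of_leftInv {N r : ℕ} {M : Matrix (Fin N) (Fin r) ℝ} {L : Matrix (Fin r) (Fin N) ℝ}
    (h : L * M = 1) : M.rank = r := by
  have hc : L.mulVecLin.comp M.mulVecLin = LinearMap.id := by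
    rw [← Matrix.mulVecLin_mul, h, Matrix.mulVecLin_one]
  have hinj : Function.Injective M.mulVecLin :=
    Function.LeftInverse.injective (g := L.mulVecLin) fun x => DFunLike.congr_fun hc x
  rw [Matrix.rank, LinearMap.finrank_range_of_inj hinj, Module.finrank_pi, Fintype.card_fin]

lemma exists_leftInv {N r : ℕ} (M : Matrix (Fin N) (Fin r) ℝ) (h : M.rank = r) :
    ∃ L : Matrix (Fin r) (Fin N) ℝ, L * M = 1 := by
  have hker : LinearMap.ker M.mulVecLin = ⊥ := by
    have h1 := M.mulVecLin.finrank_range_add_finrank_ker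
    rw [Module.finrank_pi, Fintype.card_fin] at h1
    have h2 : finrank ℝ (LinearMap.range M.mulVecLin) = r := h
    rw [h2] at h1
    have h3 : finrank ℝ (LinearMap.ker M.mulVecLin) = 0 := by omega
    exact Submodule.finrank_eq_zero.mp h3
  obtain ⟨g, hg⟩ := M.mulVecLin.exists_leftInverse_of_injective hker
  refine ⟨LinearMap.toMatrix' g, ?_⟩
  apply Matrix.toLin'.injective
  rw [Matrix.toLin'_mul, Matrix.toLin'_toMatrix', Matrix.toLin'_one, Matrix.toLin'_apply']
  exact hg

lemma colSpan_mul_le {N r k : ℕ} (M : Matrix (Fin N) (Fin r) ℝ) (C : Matrix (Fin r) (Fin k) ℝ) :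
    colSpan (M * C) ≤ colSpan M := by
  rw [colSpan_eq_range, colSpan_eq_range, Matrix.mulVecLin_mul]
  exact LinearMap.range_comp_le_range _ _

def vkronL {m n : ℕ} : (Fin m → ℝ) →ₗ[ℝ] (Fin n → ℝ) →ₗ[ℝ] (Fin (m * n) → ℝ) :=
  LinearMap.mk₂ ℝ vkronF
    (fun v v' w => by funext x; simp [vkronF]; ring)
    (fun c v w => by funext x; simp [vkronF]; ring)
    (fun v w w' => by funext x; simp [vkronF]; ring)
    (fun c v w => by funext x; simp [vkronF]; ring)

lemma skron_eq_map₂ {m n : ℕ} (S : Submodule ℝ (Fin m → ℝ)) (T : Submodule ℝ (Fin n → ℝ)) :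
    skron S T = Submodule.map₂ vkronL S T := by
  apply le_antisymm
  · apply Submodule.span_le.mpr
    rintro x ⟨v, hv, w, hw, rfl⟩
    exact Submodule.apply_mem_map₂ vkronL hv hw
  · exact Submodule.map₂_le.mpr fun v hv w hw => Submodule.subset_span ⟨v, hv, w, hw, rfl⟩

lemma colSpan_kronF {p q r s : ℕ} (B : Matrix (Fin p) (Fin r) ℝ) (A : Matrix (Fin q) (Fin s) ℝ) :
    colSpan (kronF B A) = skron (colSpan B) (colSpan A) := by
  rw [skron_eq_map₂, colSpan, colSpan, colSpan, Submodule.map₂_span_span]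
  congr 1
  ext x
  constructor
  · rintro ⟨j, rfl⟩
    refine ⟨_, ⟨(finProdFinEquiv.symm j).1, rfl⟩, _, ⟨(finProdFinEquiv.symm j).2, rfl⟩, ?_⟩
    rfl
  · rintro ⟨v, ⟨j, rfl⟩, w, ⟨l, rfl⟩, rfl⟩
    refine ⟨finProdFinEquiv (j, l), ?_⟩
    funext i
    simp only [vkronL, LinearMap.mk₂_apply, vkronF, kronF, Matrix.of_apply,
      Equiv.symm_apply_apply]

lemma memLp_matMul_entry {Ω : Type*} [mΩ : MeasurableSpace Ω] {P : Measure Ω}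
    {N r k : ℕ} (C : Matrix (Fin N) (Fin r) ℝ) {F : Ω → Matrix (Fin r) (Fin k) ℝ}
    (hF : ∀ i j, MemLp (fun ω => F ω i j) 2 P) (i : Fin N) (j : Fin k) :
    MemLp (fun ω => (C * F ω) i j) 2 P := by
  have h : (fun ω => (C * F ω) i j) = fun ω => ∑ l, C i l * F ω l j := by
    funext ω; simp [Matrix.mul_apply]
  rw [h]
  exact memLp_finset_sum _ (fun l _ => (hF l j).const_mul _)

end AuxLemmas

/-- Theorem 3: if `span(β₀ ⊗ α₀)` is the Kronecker envelope of the random matrix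
`U = u(W)` (with `α₀`, `β₀` of full column rank), then any minimizer `(a*, b*, f*)` of
`E‖A U − A (b ⊗ a) f(W)‖²` satisfies `span(b* ⊗ a*) = span(β₀ ⊗ α₀)`, and the minimum
value is `0`. -/
theorem kronecker_envelope_objective {Ω : Type*} [mΩ : MeasurableSpace Ω]
    (P : Measure Ω) [IsProbabilityMeasure P]
    (d pR pL mR mL k : ℕ)
    (W : Ω → Fin d → ℝ) (hW : Measurable W)
    (u : (Fin d → ℝ) → Matrix (Fin (pR * pL)) (Fin k) ℝ) (hu : Measurable u)
    (huL2 : ∀ i j, MemLp (fun ω => u (W ω) i j) 2 P)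
    (A : Matrix (Fin (pR * pL)) (Fin (pR * pL)) ℝ) (hA : IsUnit A)
    (α0 : Matrix (Fin pL) (Fin mL) ℝ) (β0 : Matrix (Fin pR) (Fin mR) ℝ)
    (hα0 : α0.rank = mL) (hβ0 : β0.rank = mR)
    (henv1 : ∀ᵐ ω ∂P, colSpan (u (W ω)) ≤ colSpan (kronF β0 α0))
    (henv2 : ∀ (SR : Submodule ℝ (Fin pR → ℝ)) (SL : Submodule ℝ (Fin pL → ℝ)),
      (∀ᵐ ω ∂P, colSpan (u (W ω)) ≤ skron SR SL) → colSpan (kronF β0 α0) ≤ skron SR SL)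
    (astar : Matrix (Fin pL) (Fin mL) ℝ) (bstar : Matrix (Fin pR) (Fin mR) ℝ)
    (fstar : (Fin d → ℝ) → Matrix (Fin (mR * mL)) (Fin k) ℝ)
    (hfstarMeas : Measurable fstar)
    (hfstarL2 : ∀ i j, MemLp (fun ω => fstar (W ω) i j) 2 P)
    (hmin : ∀ (a : Matrix (Fin pL) (Fin mL) ℝ) (b : Matrix (Fin pR) (Fin mR) ℝ)
        (f : (Fin d → ℝ) → Matrix (Fin (mR * mL)) (Fin k) ℝ),
        Measurable f → (∀ i j, MemLp (fun ω => f (W ω) i j) 2 P) →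
        ∫ ω, ∑ i, ∑ j, (A * u (W ω) - A * kronF bstar astar * fstar (W ω)) i j ^ 2 ∂P ≤
          ∫ ω, ∑ i, ∑ j, (A * u (W ω) - A * kronF b a * f (W ω)) i j ^ 2 ∂P) :
    colSpan (kronF bstar astar) = colSpan (kronF β0 α0) ∧
      ∫ ω, ∑ i, ∑ j, (A * u (W ω) - A * kronF bstar astar * fstar (W ω)) i j ^ 2 ∂P = 0 := by
  -- left inverses of the full-column-rank factors
  obtain ⟨Lα, hLα⟩ := exists_leftInv α0 hα0
  obtain ⟨Lβ, hLβ⟩ := exists_leftInv β0 hβ0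
  set M0 := kronF β0 α0 with hM0def
  set L0 := kronF Lβ Lα with hL0def
  have hL0 : L0 * M0 = 1 := by rw [hL0def, hM0def, kronF_mul, hLα, hLβ, kronF_one]
  set Mstar := kronF bstar astar with hMstardef
  -- the candidate f₀
  set f0 : (Fin d → ℝ) → Matrix (Fin (mR * mL)) (Fin k) ℝ := fun w => L0 * u w with hf0def
  have hf0meas : Measurable f0 := by
    apply measurable_pi_lambda
    intro i
    apply measurable_pi_lambda
    intro j
    have : (fun w => f0 w i j) = fun w => ∑ l, L0 i l * u w l j := by
      funext w; simp [hf0def, Matrix.mul_apply]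
    rw [this]
    exact Finset.measurable_sum _ fun l _ =>
      (measurable_const.mul ((measurable_pi_apply j).comp ((measurable_pi_apply l).comp hu)))
  have hf0L2 : ∀ i j, MemLp (fun ω => f0 (W ω) i j) 2 P := fun i j =>
    memLp_matMul_entry L0 huL2 i j
  -- a.e., u (W ω) = M0 * f0 (W ω)
  have hae : ∀ᵐ ω ∂P, u (W ω) = M0 * f0 (W ω) := by
    filter_upwards [henv1] with ω hω
    have hM0L0M0 : M0 * L0 * M0 = M0 := by rw [Matrix.mul_assoc, hL0, Matrix.mul_one]
    ext i j
    have hx : (fun i => u (W ω) i j) ∈ colSpan M0 :=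
      hω (Submodule.subset_span ⟨j, rfl⟩)
    rw [colSpan_eq_range] at hx
    obtain ⟨c, hc⟩ := hx
    have hcol : (M0 * L0).mulVec (fun i => u (W ω) i j) = fun i => u (W ω) i j := by
      rw [← hc, Matrix.mulVecLin_apply, Matrix.mulVec_mulVec, hM0L0M0]
    have := congrFun hcol i
    simp only [Matrix.mulVec, dotProduct] at this
    calc u (W ω) i j = ∑ l, (M0 * L0) i l * u (W ω) l j := this.symm
      _ = (M0 * L0 * u (W ω)) i j := by simp [Matrix.mul_apply]
      _ = (M0 * f0 (W ω)) i j := by rw [Matrix.mul_assoc]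
  -- the objective at (α0, β0, f0) is 0
  have hI0 : ∫ ω, ∑ i, ∑ j, (A * u (W ω) - A * M0 * f0 (W ω)) i j ^ 2 ∂P = 0 := by
    have hz : (fun ω => ∑ i, ∑ j, (A * u (W ω) - A * M0 * f0 (W ω)) i j ^ 2)
        =ᵐ[P] fun _ => (0 : ℝ) := by
      filter_upwards [hae] with ω hω
      rw [Matrix.mul_assoc, ← hω, sub_self]
      simp
    rw [integral_congr_ae hz, integral_const]
    simp
  -- the minimal value is 0
  have hstar0 :
      ∫ ω, ∑ i, ∑ j, (A * u (W ω) - A * Mstar * fstar (W ω)) i j ^ 2 ∂P = 0 := by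
    refine le_antisymm ?_ ?_
    · exact (hmin α0 β0 f0 hf0meas hf0L2).trans hI0.le
    · exact integral_nonneg fun ω =>
        Finset.sum_nonneg fun i _ => Finset.sum_nonneg fun j _ => sq_nonneg _
  refine ⟨?_, hstar0⟩
  -- integrand entries are L², hence the integrand is integrable
  have hgL2 : ∀ i j, MemLp (fun ω => (A * u (W ω) - A * Mstar * fstar (W ω)) i j) 2 P := by
    intro i j
    have h1 := memLp_matMul_entry A huL2 i j
    have h2 := memLp_matMul_entry (A * Mstar) hfstarL2 i j
    exact h1.sub h2
  have hint : Integrable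
      (fun ω => ∑ i, ∑ j, (A * u (W ω) - A * Mstar * fstar (W ω)) i j ^ 2) P :=
    integrable_finset_sum _ fun i _ =>
      integrable_finset_sum _ fun j _ => (hgL2 i j).integrable_sq
  have haez := (integral_eq_zero_iff_of_nonneg
    (fun ω => Finset.sum_nonneg fun i _ => Finset.sum_nonneg fun j _ => sq_nonneg _)
    hint).mp hstar0
  -- hence u (W ω) = Mstar * fstar (W ω) a.e.
  obtain ⟨V, hV⟩ := hA
  have hVA : (↑V⁻¹ : Matrix (Fin (pR * pL)) (Fin (pR * pL)) ℝ) * A = 1 := by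
    rw [← hV]; exact V.inv_mul
  have haeu : ∀ᵐ ω ∂P, u (W ω) = Mstar * fstar (W ω) := by
    filter_upwards [haez] with ω hω
    have hω' : ∑ i, ∑ j, (A * u (W ω) - A * Mstar * fstar (W ω)) i j ^ 2 = 0 := hω
    have hentry : ∀ i j, (A * u (W ω) - A * Mstar * fstar (W ω)) i j = 0 := by
      intro i j
      have h1 := (Finset.sum_eq_zero_iff_of_nonneg
        (fun i _ => Finset.sum_nonneg fun j _ => sq_nonneg _)).mp hω' i (Finset.mem_univ i)
      have h2 := (Finset.sum_eq_zero_iff_of_nonneg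
        (fun j _ => sq_nonneg _)).mp h1 j (Finset.mem_univ j)
      exact pow_eq_zero_iff (by norm_num) |>.mp h2
    have hmat : A * u (W ω) = A * (Mstar * fstar (W ω)) := by
      ext i j
      have := hentry i j
      rw [Matrix.sub_apply, sub_eq_zero] at this
      rw [this, Matrix.mul_assoc]
    calc u (W ω) = 1 * u (W ω) := (Matrix.one_mul _).symm
      _ = ↑V⁻¹ * A * u (W ω) := by rw [hVA]
      _ = (↑V⁻¹ : Matrix (Fin (pR * pL)) (Fin (pR * pL)) ℝ) * (A * u (W ω)) := by rw [Matrix.mul_assoc]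
      _ = (↑V⁻¹ : Matrix (Fin (pR * pL)) (Fin (pR * pL)) ℝ) * (A * (Mstar * fstar (W ω))) := by rw [hmat]
      _ = ↑V⁻¹ * A * (Mstar * fstar (W ω)) := by rw [Matrix.mul_assoc]
      _ = Mstar * fstar (W ω) := by rw [hVA, Matrix.one_mul]
  -- envelope property gives colSpan M0 ≤ colSpan Mstar
  have hsub : ∀ᵐ ω ∂P, colSpan (u (W ω)) ≤ skron (colSpan bstar) (colSpan astar) := by
    filter_upwards [haeu] with ω hω
    rw [← colSpan_kronF, ← hMstardef, hω]
    exact colSpan_mul_le _ _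
  have hle : colSpan M0 ≤ colSpan Mstar := by
    have := henv2 (colSpan bstar) (colSpan astar) hsub
    rwa [← colSpan_kronF, ← hMstardef] at this
  -- dimension count
  have hfr0 : Module.finrank ℝ (colSpan M0) = mR * mL := by
    rw [← rank_eq_finrank_colSpan]; exact rank_of_leftInv hL0
  have hfrstar : Module.finrank ℝ (colSpan Mstar) ≤ mR * mL :=
    (rank_eq_finrank_colSpan Mstar).symm.trans_le Mstar.rank_le_width
  exact (Submodule.eq_of_le_of_finrank_le hle (hfrstar.trans hfr0.ge)).symm
end
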